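/- In the quantum torus k⟨x^{±1}, z^{±1} | zx = p^{-1}xz⟩ with p not a root of unity, there is no element d such that dx - xd = x^{-1}; i.e., the derivation sending x ↦ x^{-1}, z ↦ 0 is not inner. -/

import Mathlib

/-- In the quantum torus `k⟨x^{±1}, z^{±1} | zx = q xz⟩` (with `q` not a root of
unity), there is no element `d` with `dx - xd = x⁻¹`; i.e. the derivation sending
`x ↦ x⁻¹`, `z ↦ 0` is not inner. The quantum torus is axiomatized as an algebra
with invertible elements `x, z` satisfying the relation, for which the monomials
`x^i z^j` (`i, j ∈ ℤ`) form a `k`-basis. -/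
theorem quantum_torus_derivation_not_inner {k A : Type*} [Field k] [Ring A] [Algebra k A]
    (q : k) (hq : q ≠ 0) (hq' : ∀ n : ℕ, 0 < n → q ^ n ≠ 1)
    (X Z : Aˣ) (hrel : (Z : A) * X = q • ((X : A) * Z))
    (hind : LinearIndependent k (fun ij : ℤ × ℤ => ((X ^ ij.1 : Aˣ) : A) * ((Z ^ ij.2 : Aˣ) : A)))
    (hspan : Submodule.span k
      (Set.range (fun ij : ℤ × ℤ => ((X ^ ij.1 : Aˣ) : A) * ((Z ^ ij.2 : Aˣ) : A))) = ⊤) :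
    ¬ ∃ d : A, d * X - (X : A) * d = ((X⁻¹ : Aˣ) : A) := by
  -- commutation of Z^j past X
  have hinv : ((Z⁻¹ : Aˣ) : A) * X = q⁻¹ • ((X : A) * (Z⁻¹ : Aˣ)) := by
    have h1 : (X : A) * (Z⁻¹ : Aˣ) = q • (((Z⁻¹ : Aˣ) : A) * X) := by
      have := congrArg (fun a => ((Z⁻¹ : Aˣ) : A) * a * ((Z⁻¹ : Aˣ) : A)) hrel
      simp only [mul_smul_comm, smul_mul_assoc] at this
      calc (X : A) * (Z⁻¹ : Aˣ)
          = ((Z⁻¹ : Aˣ) : A) * ((Z : A) * X) * ((Z⁻¹ : Aˣ) : A) := by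
            simp [mul_assoc, Units.inv_mul_cancel_left]
        _ = q • (((Z⁻¹ : Aˣ) : A) * ((X : A) * Z) * ((Z⁻¹ : Aˣ) : A)) := this
        _ = q • (((Z⁻¹ : Aˣ) : A) * X) := by
            simp [mul_assoc, Units.mul_inv_cancel_right]
    calc ((Z⁻¹ : Aˣ) : A) * X = q⁻¹ • (q • (((Z⁻¹ : Aˣ) : A) * X)) := by
          rw [smul_smul, inv_mul_cancel₀ hq, one_smul]
      _ = q⁻¹ • ((X : A) * (Z⁻¹ : Aˣ)) := by rw [← h1]
  have keyZ : ∀ j : ℤ, ((Z ^ j : Aˣ) : A) * X = q ^ j • ((X : A) * (Z ^ j : Aˣ)) := by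
    intro j
    induction j using Int.induction_on with
    | zero => simp
    | succ i ih =>
        have hz : (Z ^ ((i : ℤ) + 1) : Aˣ) = Z ^ (i : ℤ) * Z := by
          rw [zpow_add_one]
        rw [hz, Units.val_mul, mul_assoc, hrel, mul_smul_comm, ← mul_assoc, ih,
          smul_mul_assoc, smul_smul, mul_assoc, ← Units.val_mul, ← hz]
        congr 1
        rw [zpow_add_one₀ hq]; ring
    | pred i ih =>
        have hz : (Z ^ (-(i : ℤ) - 1) : Aˣ) = Z ^ (-(i : ℤ)) * Z⁻¹ := by
          rw [zpow_sub_one]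
        rw [hz, Units.val_mul, mul_assoc, hinv, mul_smul_comm, ← mul_assoc, ih,
          smul_mul_assoc, smul_smul, mul_assoc, ← Units.val_mul, ← hz]
        congr 1
        rw [zpow_sub_one₀ hq]; ring
  -- the basis
  let B : Module.Basis (ℤ × ℤ) k A := Module.Basis.mk hind hspan.ge
  have hB : ∀ ij : ℤ × ℤ, B ij = ((X ^ ij.1 : Aˣ) : A) * ((Z ^ ij.2 : Aˣ) : A) := by
    intro ij; simp [B]
  -- the commutator map
  let L : A →ₗ[k] A := LinearMap.mulRight k (X : A) - LinearMap.mulLeft k (X : A)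
  have hL : ∀ a : A, L a = a * X - (X : A) * a := fun a => rfl
  have hLB : ∀ ij : ℤ × ℤ, L (B ij) = (q ^ ij.2 - 1) • B (ij.1 + 1, ij.2) := by
    rintro ⟨i, j⟩
    rw [hL, hB, hB]
    have h1 : ((X ^ i : Aˣ) : A) * ((Z ^ j : Aˣ) : A) * X
        = q ^ j • (((X ^ (i + 1) : Aˣ) : A) * ((Z ^ j : Aˣ) : A)) := by
      rw [mul_assoc, keyZ, mul_smul_comm, ← mul_assoc, ← Units.val_mul, ← zpow_add_one]
    have h2 : (X : A) * (((X ^ i : Aˣ) : A) * ((Z ^ j : Aˣ) : A))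
        = ((X ^ (i + 1) : Aˣ) : A) * ((Z ^ j : Aˣ) : A) := by
      rw [← mul_assoc, ← Units.val_mul, ← zpow_one_add, add_comm]
    rw [h1, h2, sub_smul, one_smul]
  rintro ⟨d, hd⟩
  have hLd : L d = ((X⁻¹ : Aˣ) : A) := by rw [hL]; exact hd
  -- expand d in the basis
  have hrepr : (B.repr d).sum (fun ij a => a • B ij) = d := B.linearCombination_repr d
  have hsum : L d = (B.repr d).sum (fun ij a => (a * (q ^ ij.2 - 1)) • B (ij.1 + 1, ij.2)) := by
    conv_lhs => rw [← hrepr, map_finsuppSum]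
    refine Finsupp.sum_congr fun ij _ => ?_
    rw [map_smul, hLB, smul_smul]
  have hXinv : ((X⁻¹ : Aˣ) : A) = B (-1, 0) := by
    rw [hB]; simp
  -- evaluate the (-1, 0) coefficient
  have hcoe : B.repr (L d) (-1, 0) = 0 := by
    rw [hsum, map_finsuppSum, Finsupp.sum_apply, Finsupp.sum]
    refine Finset.sum_eq_zero fun ij _ => ?_
    rw [map_smul, Module.Basis.repr_self, Finsupp.smul_apply, Finsupp.single_apply]
    by_cases h : (ij.1 + 1, ij.2) = ((-1 : ℤ), (0 : ℤ))
    · have hj : ij.2 = 0 := (Prod.mk.injEq _ _ _ _ ▸ h).2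
      simp [h, hj]
    · simp [h]
  rw [hLd, hXinv, Module.Basis.repr_self] at hcoe
  simp at hcoe
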